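/- Let L := Σ_{i≥0} b_i z^{2^i} ∈ K[[z]]. Then L satisfies the logarithm functional equation of the Drinfeld module: x·L(z) = L(x·z) + L((x² + x)·z²) + L(z⁴), where L(u(z)) denotes substitution of the power series u(z) (which has zero constant term) into L. -/

import Mathlib

noncomputable section

open Polynomial

/-- The defining polynomial `Y² + Y + (X³ + X + 1)` over `𝔽₂[X]`,
viewed as a polynomial in `Y` with coefficients in `𝔽₂[X]`. -/
def curveEq : Polynomial (Polynomial (ZMod 2)) :=
  X ^ 2 + X + C (X ^ 3 + X + 1)

/-- The ring `A = 𝔽₂[X,Y]/(Y² + Y + X³ + X + 1)`. -/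
abbrev A : Type := AdjoinRoot curveEq

/-- The image `x` of `X` in `A`. -/
def aX : A := AdjoinRoot.of curveEq (X : Polynomial (ZMod 2))

/-- The image `y` of `Y` in `A`. -/
def aY : A := AdjoinRoot.root curveEq

/-- The bracket `[j]_x = x^{2^j} + x ∈ A`. -/
def brX (j : ℕ) : A := aX ^ 2 ^ j + aX

variable (K : Type) [Field K] [Algebra A K]

/-- The coefficients `b_j = 1/ℓ_j` of the logarithm function:
`b₀ = b₁ = 1` and `b_j = ([1]_x^{2^{j-1}}·b_{j-1} + b_{j-2})/[j]_x` for `j ≥ 2`. -/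
def bSeq : ℕ → K
  | 0 => 1
  | 1 => 1
  | (j + 2) =>
      (algebraMap A K (brX 1) ^ 2 ^ (j + 1) * bSeq (j + 1) + bSeq j) /
        algebraMap A K (brX (j + 2))

open scoped Classical in
/-- The logarithm power series `L = Σ_{i≥0} b_i z^{2^i} ∈ K[[z]]`. -/
def logSer : PowerSeries K :=
  PowerSeries.mk fun n => if ∃ i : ℕ, n = 2 ^ i then bSeq K (Nat.log 2 n) else 0

/-- Substitution of the power series `g` (with zero constant term) into `f`:
the coefficient of `zⁿ` in `f(g(z))` is `Σ_{m=0}^{n} f_m · (gᵐ)_n`. -/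
def psComp {R : Type*} [CommRing R] (f g : PowerSeries R) : PowerSeries R :=
  PowerSeries.mk fun n =>
    ∑ m ∈ Finset.range (n + 1), PowerSeries.coeff m f * PowerSeries.coeff n (g ^ m)

/-- `L` satisfies the logarithm functional equation of the Drinfeld module:
`x·L(z) = L(x·z) + L((x² + x)·z²) + L(z⁴)`. -/
-- auxiliary lemmas

lemma of_injective' : Function.Injective (AdjoinRoot.of curveEq) := by
  apply AdjoinRoot.of.injective_of_degree_ne_zero
  rw [show curveEq.degree = 2 by unfold curveEq; compute_degree!]
  norm_num

lemma brX_ne_zero' {j : ℕ} (hj : 1 ≤ j) : brX j ≠ 0 := by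
  have heq : brX j = AdjoinRoot.of curveEq (X ^ 2 ^ j + X) := by
    rw [map_add, map_pow]; rfl
  rw [heq, ← map_zero (AdjoinRoot.of curveEq)]
  intro h
  have h2 : (X ^ 2 ^ j + X : Polynomial (ZMod 2)) = 0 := of_injective' h
  have h3 : (X ^ 2 ^ j + X : Polynomial (ZMod 2)).coeff (2 ^ j) = 1 := by
    rw [Polynomial.coeff_add, Polynomial.coeff_X_pow, Polynomial.coeff_X]
    have h4 : 2 ≤ 2 ^ j := Nat.one_lt_two_pow_iff.mpr (by omega)
    rw [if_pos rfl, if_neg (by omega)]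
    norm_num
  rw [h2] at h3
  simp at h3

lemma two_eq_zero_K' [IsFractionRing A K] : (2 : K) = 0 := by
  have hp : (2 : Polynomial (ZMod 2)) = 0 := by
    have h : ((2:ℕ) : Polynomial (ZMod 2)) = Polynomial.C ((2:ℕ) : ZMod 2) :=
      (Polynomial.C_eq_natCast _).symm
    rw [show ((2:ℕ) : ZMod 2) = 0 by decide, map_zero] at h
    simpa using h
  have hA : (2 : A) = 0 := by
    rw [show (2:A) = AdjoinRoot.of curveEq 2 from (map_ofNat _ 2).symm, hp, map_zero]
  rw [show (2:K) = algebraMap A K 2 from (map_ofNat _ 2).symm, hA, map_zero]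

omit [Algebra A K] in
lemma coeff_psComp_monomial' (f : PowerSeries K) (c : K) (k n : ℕ) (hk : 0 < k) :
    PowerSeries.coeff n (psComp f (PowerSeries.C c * PowerSeries.X ^ k)) =
      if k ∣ n then PowerSeries.coeff (n / k) f * c ^ (n / k) else 0 := by
  rw [psComp, PowerSeries.coeff_mk]
  have hterm : ∀ m, PowerSeries.coeff n ((PowerSeries.C c * PowerSeries.X ^ k) ^ m)
      = if n = k * m then c ^ m else 0 := by
    intro m
    rw [mul_pow, ← map_pow, ← pow_mul, PowerSeries.coeff_C_mul, PowerSeries.coeff_X_pow]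
    simp [mul_ite]
  simp_rw [hterm, mul_ite, mul_zero]
  by_cases hd : k ∣ n
  · obtain ⟨q, rfl⟩ := hd
    rw [if_pos ⟨q, rfl⟩, Finset.sum_eq_single q]
    · rw [if_pos rfl, Nat.mul_div_cancel_left q hk]
    · intro m _ hm
      rw [if_neg (fun h => hm (Nat.eq_of_mul_eq_mul_left hk h.symm))]
    · intro h
      exact absurd (Finset.mem_range.mpr (Nat.lt_succ_of_le (Nat.le_mul_of_pos_left q hk))) h
  · rw [if_neg hd]
    exact Finset.sum_eq_zero fun m _ => by
      rw [if_neg (fun h => hd ⟨m, h⟩)]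


theorem stmt5 [IsFractionRing A K] :
    PowerSeries.C (algebraMap A K aX) * logSer K =
      psComp (logSer K) (PowerSeries.C (algebraMap A K aX) * PowerSeries.X) +
        psComp (logSer K)
          (PowerSeries.C (algebraMap A K (aX ^ 2 + aX)) * PowerSeries.X ^ 2) +
          psComp (logSer K) (PowerSeries.X ^ 4) := by
  classical
  have h2 : (2 : K) = 0 := two_eq_zero_K' K
  set a : K := algebraMap A K aX with ha
  have hc2 : algebraMap A K (aX ^ 2 + aX) = a ^ 2 + a := by rw [map_add, map_pow]
  have hbr1 : algebraMap A K (brX 1) = a ^ 2 + a := by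
    rw [brX, map_add, map_pow, pow_one]
  ext n
  rw [PowerSeries.coeff_C_mul, map_add, map_add,
    show (PowerSeries.C a * PowerSeries.X : PowerSeries K)
        = PowerSeries.C a * PowerSeries.X ^ 1 by rw [pow_one],
    show (PowerSeries.X ^ 4 : PowerSeries K) = PowerSeries.C 1 * PowerSeries.X ^ 4 by
      rw [map_one, one_mul],
    coeff_psComp_monomial' K _ _ 1 n one_pos,
    coeff_psComp_monomial' K _ _ 2 n two_pos,
    coeff_psComp_monomial' K _ _ 4 n four_pos]
  simp only [Nat.one_dvd, if_true, Nat.div_one, one_pow, mul_one]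
  by_cases hpow : ∃ i : ℕ, n = 2 ^ i
  · obtain ⟨i, rfl⟩ := hpow
    have hcoeff : ∀ j : ℕ, PowerSeries.coeff (2 ^ j) (logSer K) = bSeq K j := by
      intro j
      rw [logSer, PowerSeries.coeff_mk, if_pos ⟨j, rfl⟩, Nat.log_pow one_lt_two]
    match i with
    | 0 =>
      have c0 : PowerSeries.coeff (2 ^ 0) (logSer K) = bSeq K 0 := hcoeff 0
      rw [c0, if_neg (by norm_num : ¬ (2:ℕ) ∣ 2 ^ 0), if_neg (by norm_num : ¬ (4:ℕ) ∣ 2 ^ 0)]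
      simp [bSeq]
    | 1 =>
      have c0 : PowerSeries.coeff (2 ^ 1 / 2) (logSer K) = bSeq K 0 := by
        rw [show (2:ℕ) ^ 1 / 2 = 2 ^ 0 by norm_num]; exact hcoeff 0
      rw [if_pos (by norm_num : (2:ℕ) ∣ 2 ^ 1), if_neg (by norm_num : ¬ (4:ℕ) ∣ 2 ^ 1),
        hcoeff 1, c0, hc2, show (2:ℕ) ^ 1 / 2 = 1 by norm_num]
      simp only [bSeq, one_mul, mul_one, pow_one, add_zero]
      linear_combination (-(a ^ 2 ^ 1)) * h2
    | (j + 2) =>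
      have h2d : (2 : ℕ) ∣ 2 ^ (j + 2) := ⟨2 ^ (j + 1), by ring⟩
      have h4d : (4 : ℕ) ∣ 2 ^ (j + 2) := ⟨2 ^ j, by ring⟩
      have e2 : 2 ^ (j + 2) / 2 = 2 ^ (j + 1) := by
        rw [show (2:ℕ) ^ (j + 2) = 2 ^ (j + 1) * 2 by ring]
        exact Nat.mul_div_cancel _ two_pos
      have e4 : 2 ^ (j + 2) / 4 = 2 ^ j := by
        rw [show (2:ℕ) ^ (j + 2) = 2 ^ j * 4 by ring]
        exact Nat.mul_div_cancel _ (by norm_num)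
      rw [if_pos h2d, if_pos h4d, e2, e4, hcoeff (j + 2), hcoeff (j + 1), hcoeff j, hc2]
      have hD : algebraMap A K (brX (j + 2)) ≠ 0 := by
        intro h
        exact brX_ne_zero' (j := j + 2) (by omega)
          (IsFractionRing.injective A K (by rw [h, map_zero]))
      have hDval : algebraMap A K (brX (j + 2)) = a ^ 2 ^ (j + 2) + a := by
        rw [brX, map_add, map_pow]
      have key : bSeq K (j + 2) * (a ^ 2 ^ (j + 2) + a)
          = (a ^ 2 + a) ^ 2 ^ (j + 1) * bSeq K (j + 1) + bSeq K j := by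
        have hb : bSeq K (j + 2)
            = ((a ^ 2 + a) ^ 2 ^ (j + 1) * bSeq K (j + 1) + bSeq K j) /
              (a ^ 2 ^ (j + 2) + a) := by
          rw [show bSeq K (j + 2)
              = (algebraMap A K (brX 1) ^ 2 ^ (j + 1) * bSeq K (j + 1) + bSeq K j) /
                algebraMap A K (brX (j + 2)) from rfl, hbr1, hDval]
        rw [hb, div_mul_cancel₀]
        rw [← hDval]; exact hD
      linear_combination key - bSeq K (j + 2) * a ^ 2 ^ (j + 2) * h2
  · have hz : ∀ k q : ℕ, n = 2 ^ k * q → PowerSeries.coeff q (logSer K) = 0 := by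
      intro k q hq
      rw [logSer, PowerSeries.coeff_mk, if_neg]
      rintro ⟨i, rfl⟩
      exact hpow ⟨k + i, by rw [hq, pow_add]⟩
    rw [hz 0 n (by ring)]
    by_cases h2d : (2:ℕ) ∣ n
    · obtain ⟨q, rfl⟩ := h2d
      rw [if_pos ⟨q, rfl⟩, Nat.mul_div_cancel_left q two_pos, hz 1 q (by ring)]
      by_cases h4d : (4:ℕ) ∣ 2 * q
      · obtain ⟨r, hr⟩ := h4d
        have hq4 : 2 * q / 4 = r := by omega
        rw [if_pos ⟨r, hr⟩, hq4, hz 2 r (by rw [hr]; norm_num)]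
        ring
      · rw [if_neg h4d]; ring
    · rw [if_neg h2d, if_neg (show ¬ (4:ℕ) ∣ n from fun h => h2d (dvd_trans (by norm_num) h))]
      ring
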